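/- (Hardy–Littlewood inequality for polarization on a domain.) Let p ∈ (1, ∞), let H be an open affine half-space in ℝ^N with 0 ∈ closure(H), and let Ω ⊂ ℝ^N be a bounded open set satisfying Ω = Ω_H. Let v, w ∈ L^p(Ω) be such that v·w is integrable on Ω, at least one of v and w is nonnegative a.e. on Ω, and the product v_H·w_H of their polarizations is integrable on Ω. Then ∫_Ω v(x) w(x) dx ≤ ∫_Ω v_H(x) w_H(x) dx. -/

import Mathlib

open MeasureTheory
open scoped RealInnerProductSpace ENNReal

/-- Reflection of `ℝ^N` across the hyperplane `{x : ⟪x, u⟫ = c}` (for a unit vector `u`). -/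
noncomputable def reflHyp {N : ℕ} (u : EuclideanSpace ℝ (Fin N)) (c : ℝ)
    (x : EuclideanSpace ℝ (Fin N)) : EuclideanSpace ℝ (Fin N) :=
  x - (2 * (⟪x, u⟫ - c)) • u

/-- The open affine half-space `{x : ⟪x, u⟫ < c}`. -/
def halfSpace {N : ℕ} (u : EuclideanSpace ℝ (Fin N)) (c : ℝ) :
    Set (EuclideanSpace ℝ (Fin N)) :=
  {x | ⟪x, u⟫ < c}

/-- Polarization of a set `Ω` with respect to the half-space `H = halfSpace u c`:
`Ω_H = ((Ω ∪ σ_H(Ω)) ∩ H) ∪ (Ω ∩ σ_H(Ω))`. -/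
noncomputable def polSet {N : ℕ} (u : EuclideanSpace ℝ (Fin N)) (c : ℝ)
    (Ω : Set (EuclideanSpace ℝ (Fin N))) : Set (EuclideanSpace ℝ (Fin N)) :=
  ((Ω ∪ reflHyp u c '' Ω) ∩ halfSpace u c) ∪ (Ω ∩ reflHyp u c '' Ω)

/-- Polarization of a function `f : ℝ^N → ℝ` with respect to `H = halfSpace u c`:
`f_H(x) = max (f x) (f (σ_H x))` if `x ∈ H`, and `f_H(x) = min (f x) (f (σ_H x))` otherwise. -/
noncomputable def polFun {N : ℕ} (u : EuclideanSpace ℝ (Fin N)) (c : ℝ)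
    (f : EuclideanSpace ℝ (Fin N) → ℝ) (x : EuclideanSpace ℝ (Fin N)) : ℝ :=
  if ⟪x, u⟫ < c then max (f x) (f (reflHyp u c x))
  else min (f x) (f (reflHyp u c x))

section Aux
variable {N : ℕ} {u : EuclideanSpace ℝ (Fin N)} {c : ℝ}

lemma inner_reflHyp (hu : ‖u‖ = 1) (x : EuclideanSpace ℝ (Fin N)) :
    ⟪reflHyp u c x, u⟫ = 2 * c - ⟪x, u⟫ := by
  have : ⟪u, u⟫ = 1 := by
    rw [real_inner_self_eq_norm_sq, hu]; norm_num
  rw [reflHyp, inner_sub_left, real_inner_smul_left, this]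
  ring

lemma reflHyp_invol (hu : ‖u‖ = 1) : Function.Involutive (reflHyp u c) := by
  intro x
  conv_lhs => rw [reflHyp, inner_reflHyp hu]
  rw [reflHyp]
  module

lemma reflHyp_eq (hu : ‖u‖ = 1) (x : EuclideanSpace ℝ (Fin N)) :
    reflHyp u c x = ((ℝ ∙ u)ᗮ.reflection x) + (2 * c) • u := by
  rw [Submodule.reflection_orthogonal_apply, Submodule.reflection_apply, Submodule.starProjection_singleton]
  rw [reflHyp]
  rw [hu, real_inner_comm u x]
  push_cast
  module

lemma measurePreserving_reflHyp (hu : ‖u‖ = 1) :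
    MeasurePreserving (reflHyp u c) (volume) (volume) := by
  have h1 := ((ℝ ∙ u)ᗮ.reflection).measurePreserving
  have h2 := measurePreserving_add_right (volume : Measure (EuclideanSpace ℝ (Fin N))) ((2 * c) • u)
  have h3 := h2.comp h1
  have : reflHyp u c = (· + (2 * c) • u) ∘ ((ℝ ∙ u)ᗮ.reflection) := by
    funext x; simp [reflHyp_eq hu, Function.comp]
  rwa [this]

lemma hyperplane_null (hu : ‖u‖ = 1) :
    volume {x : EuclideanSpace ℝ (Fin N) | ⟪x, u⟫ = c} = 0 := by
  have huu : ⟪u, u⟫ = 1 := by rw [real_inner_self_eq_norm_sq, hu]; norm_num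
  have hset : {x : EuclideanSpace ℝ (Fin N) | ⟪x, u⟫ = c}
      = (AffineSubspace.mk' (c • u) (ℝ ∙ u)ᗮ : Set (EuclideanSpace ℝ (Fin N))) := by
    ext x
    simp only [Set.mem_setOf_eq, SetLike.mem_coe, AffineSubspace.mem_mk',
      vsub_eq_sub, Submodule.mem_orthogonal_singleton_iff_inner_right,
      inner_sub_right, real_inner_smul_right, huu, real_inner_comm u x]
    constructor <;> intro h <;> linarith
  rw [hset]
  apply Measure.addHaar_affineSubspace
  intro htop
  have : (ℝ ∙ u)ᗮ = ⊤ := by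
    have := congrArg AffineSubspace.direction htop
    rwa [AffineSubspace.direction_mk', AffineSubspace.direction_top] at this
  have hu0 : u ∈ (ℝ ∙ u)ᗮ := this ▸ Submodule.mem_top
  rw [Submodule.mem_orthogonal_singleton_iff_inner_right] at hu0
  rw [huu] at hu0; norm_num at hu0

lemma continuous_reflHyp : Continuous (reflHyp u c) := by
  unfold reflHyp; fun_prop

noncomputable def reflHomeo (hu : ‖u‖ = 1) :
    EuclideanSpace ℝ (Fin N) ≃ₜ EuclideanSpace ℝ (Fin N) :=
  Homeomorph.mk ((reflHyp_invol (c := c) hu).toPerm) continuous_reflHyp continuous_reflHyp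

lemma key_ineq (a a' b b' : ℝ) :
    a * b + a' * b' ≤ max a a' * max b b' + min a a' * min b b' := by
  rcases le_total a a' with h | h <;> rcases le_total b b' with h' | h' <;>
    simp [max_eq_left, max_eq_right, min_eq_left, min_eq_right, h, h'] <;> nlinarith

lemma pair_le (hu : ‖u‖ = 1) (f g : EuclideanSpace ℝ (Fin N) → ℝ)
    {x : EuclideanSpace ℝ (Fin N)} (hx : ⟪x, u⟫ < c) :
    f x * g x + f (reflHyp u c x) * g (reflHyp u c x) ≤
      polFun u c f x * polFun u c g x +
        polFun u c f (reflHyp u c x) * polFun u c g (reflHyp u c x) := by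
  have hσx : ¬ ⟪reflHyp u c x, u⟫ < c := by
    rw [inner_reflHyp hu]; linarith
  have hinv := reflHyp_invol (c := c) hu x
  rw [polFun, polFun, polFun, polFun, if_pos hx, if_pos hx, if_neg hσx, if_neg hσx, hinv]
  calc f x * g x + f (reflHyp u c x) * g (reflHyp u c x)
      ≤ max (f x) (f (reflHyp u c x)) * max (g x) (g (reflHyp u c x)) +
        min (f x) (f (reflHyp u c x)) * min (g x) (g (reflHyp u c x)) :=
        key_ineq _ _ _ _
    _ = _ := by rw [min_comm (f x), min_comm (g x)]

lemma aesm_polFun (hu : ‖u‖ = 1) {f : EuclideanSpace ℝ (Fin N) → ℝ}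
    (hf : AEStronglyMeasurable f (volume : Measure (EuclideanSpace ℝ (Fin N)))) :
    AEStronglyMeasurable (polFun u c f) (volume : Measure (EuclideanSpace ℝ (Fin N))) := by
  have hS : MeasurableSet {x : EuclideanSpace ℝ (Fin N) | ⟪x, u⟫ < c} :=
    measurableSet_lt ((continuous_id.inner continuous_const).measurable) measurable_const
  have hfσ : AEStronglyMeasurable (fun x => f (reflHyp u c x))
      (volume : Measure (EuclideanSpace ℝ (Fin N))) :=
    hf.comp_quasiMeasurePreserving (measurePreserving_reflHyp hu).quasiMeasurePreserving
  rw [aestronglyMeasurable_iff_aemeasurable] at hf hfσ ⊢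
  have heq : polFun u c f =
      {x : EuclideanSpace ℝ (Fin N) | ⟪x, u⟫ < c}.indicator
        (fun x => max (f x) (f (reflHyp u c x))) +
      {x : EuclideanSpace ℝ (Fin N) | ⟪x, u⟫ < c}ᶜ.indicator
        (fun x => min (f x) (f (reflHyp u c x))) := by
    funext x
    by_cases hx : ⟪x, u⟫ < c
    · have hmem : x ∈ {y : EuclideanSpace ℝ (Fin N) | ⟪y, u⟫ < c} := hx
      rw [Pi.add_apply, polFun, if_pos hx, Set.indicator_of_mem hmem,
        Set.indicator_of_notMem (Set.notMem_compl_iff.mpr hmem), add_zero]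
    · have hmem : x ∉ {y : EuclideanSpace ℝ (Fin N) | ⟪y, u⟫ < c} := hx
      rw [Pi.add_apply, polFun, if_neg hx, Set.indicator_of_notMem hmem,
        Set.indicator_of_mem (Set.mem_compl hmem), zero_add]
  rw [heq]
  exact ((hf.max hfσ).indicator hS).add ((hf.min hfσ).indicator hS.compl)

end Aux

/-- (Hardy–Littlewood inequality for polarization on a domain.) For
`p ∈ (1, ∞)`, a half-space `H` with `0 ∈ closure H`, a bounded open `Ω` with `Ω = Ω_H`, and
`v, w ∈ L^p(Ω)` with `v·w` and `v_H·w_H` integrable on `Ω` and at least one of `v, w`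
nonnegative a.e. on `Ω`, one has `∫_Ω v w ≤ ∫_Ω v_H w_H`. -/
theorem polFun_hardy_littlewood_domain {N : ℕ} (p : ℝ≥0∞) (hp1 : 1 < p) (hptop : p ≠ ⊤)
    (u : EuclideanSpace ℝ (Fin N)) (hu : ‖u‖ = 1) (c : ℝ)
    (h0 : (0 : EuclideanSpace ℝ (Fin N)) ∈ closure (halfSpace u c))
    (Ω : Set (EuclideanSpace ℝ (Fin N))) (hbdd : Bornology.IsBounded Ω) (hopen : IsOpen Ω)
    (hΩ : Ω = polSet u c Ω)
    (v w : EuclideanSpace ℝ (Fin N) → ℝ)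
    (hv : MemLp v p (volume.restrict Ω)) (hw : MemLp w p (volume.restrict Ω))
    (hvw : Integrable (fun x => v x * w x) (volume.restrict Ω))
    (hsign : (∀ᵐ x ∂volume.restrict Ω, 0 ≤ v x) ∨ (∀ᵐ x ∂volume.restrict Ω, 0 ≤ w x))
    (hvwH : Integrable
      (fun x => polFun u c (Ω.indicator v) x * polFun u c (Ω.indicator w) x)
      (volume.restrict Ω)) :
    ∫ x in Ω, v x * w x ≤
      ∫ x in Ω, polFun u c (Ω.indicator v) x * polFun u c (Ω.indicator w) x := by
  classical
  have hmeasΩ : MeasurableSet Ω := hopen.measurableSet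
  set f := Ω.indicator v with hfdef
  set g := Ω.indicator w with hgdef
  have hmp := measurePreserving_reflHyp (c := c) hu
  have hinv := reflHyp_invol (c := c) hu
  have hfm : AEStronglyMeasurable f volume :=
    (aestronglyMeasurable_indicator_iff hmeasΩ).mpr hv.aestronglyMeasurable
  have hgm : AEStronglyMeasurable g volume :=
    (aestronglyMeasurable_indicator_iff hmeasΩ).mpr hw.aestronglyMeasurable
  set F := fun x => polFun u c f x * polFun u c g x with hFdef
  have hFm : AEStronglyMeasurable F volume := (aesm_polFun hu hfm).mul (aesm_polFun hu hgm)
  have hGa : (fun x => f x * g x) = Ω.indicator (fun x => v x * w x) := by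
    funext x
    by_cases hx : x ∈ Ω
    · rw [hfdef, hgdef, Set.indicator_of_mem hx, Set.indicator_of_mem hx,
        Set.indicator_of_mem hx]
    · rw [hfdef, hgdef, Set.indicator_of_notMem hx, Set.indicator_of_notMem hx,
        Set.indicator_of_notMem hx, zero_mul]
  have hGint : Integrable (fun x => f x * g x) volume := by
    rw [hGa, integrable_indicator_iff hmeasΩ]; exact hvw
  have hbd : ∀ᵐ x : EuclideanSpace ℝ (Fin N) ∂volume, ⟪x, u⟫ ≠ c := by
    rw [ae_iff]; simpa using hyperplane_null (c := c) hu
  have hoff : ∀ x : EuclideanSpace ℝ (Fin N), x ∉ Ω → ⟪x, u⟫ < c → reflHyp u c x ∉ Ω := by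
    intro x hxΩ hxlt hσ
    exact hxΩ (by rw [hΩ]; exact Or.inl ⟨Or.inr ⟨reflHyp u c x, hσ, hinv x⟩, hxlt⟩)
  have key : ∀ v' : EuclideanSpace ℝ (Fin N) → ℝ, (∀ᵐ x ∂volume.restrict Ω, 0 ≤ v' x) →
      ∀ᵐ x : EuclideanSpace ℝ (Fin N) ∂volume, 0 ≤ Ω.indicator v' (reflHyp u c x) := by
    intro v' hs
    have h1 : ∀ᵐ x : EuclideanSpace ℝ (Fin N) ∂volume, 0 ≤ Ω.indicator v' x := by
      rw [ae_restrict_iff' hmeasΩ] at hs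
      filter_upwards [hs] with x hx
      by_cases hm : x ∈ Ω
      · rw [Set.indicator_of_mem hm]; exact hx hm
      · rw [Set.indicator_of_notMem hm]
    rw [ae_iff] at h1 ⊢
    exact hmp.quasiMeasurePreserving.preimage_null h1
  have hzero : ∀ᵐ x : EuclideanSpace ℝ (Fin N) ∂volume, x ∉ Ω → F x = 0 := by
    rcases hsign with hs | hs
    · filter_upwards [key v hs] with x hx hxΩ
      by_cases hlt : ⟪x, u⟫ < c
      · have h1 : f x = 0 := Set.indicator_of_notMem hxΩ _
        have h2 : f (reflHyp u c x) = 0 := Set.indicator_of_notMem (hoff x hxΩ hlt) _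
        rw [hFdef]
        simp only [polFun, if_pos hlt]
        rw [h1, h2, max_self, zero_mul]
      · have h1 : f x = 0 := Set.indicator_of_notMem hxΩ _
        have hmin : min (f x) (f (reflHyp u c x)) = 0 := by
          rw [h1]; exact le_antisymm (min_le_left _ _) (le_min le_rfl hx)
        rw [hFdef]
        simp only [polFun, if_neg hlt]
        rw [hmin, zero_mul]
    · filter_upwards [key w hs] with x hx hxΩ
      by_cases hlt : ⟪x, u⟫ < c
      · have h1 : g x = 0 := Set.indicator_of_notMem hxΩ _
        have h2 : g (reflHyp u c x) = 0 := Set.indicator_of_notMem (hoff x hxΩ hlt) _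
        rw [hFdef]
        simp only [polFun, if_pos hlt]
        rw [h1, h2, max_self, mul_zero]
      · have h1 : g x = 0 := Set.indicator_of_notMem hxΩ _
        have hmin : min (g x) (g (reflHyp u c x)) = 0 := by
          rw [h1]; exact le_antisymm (min_le_left _ _) (le_min le_rfl hx)
        rw [hFdef]
        simp only [polFun, if_neg hlt]
        rw [hmin, mul_zero]
  have hFeq : F =ᵐ[volume] Ω.indicator F := by
    filter_upwards [hzero] with x hx
    by_cases hm : x ∈ Ω
    · rw [Set.indicator_of_mem hm]
    · rw [Set.indicator_of_notMem hm, hx hm]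
  have hFindint : Integrable (Ω.indicator F) volume := by
    rw [integrable_indicator_iff hmeasΩ]; exact hvwH
  have hFint : Integrable F volume := hFindint.congr hFeq.symm
  set D := fun x => F x - f x * g x with hDdef
  have hDint : Integrable D volume := hFint.sub hGint
  have hDσint : Integrable (fun x => D (reflHyp u c x)) volume :=
    (hmp.integrable_comp hDint.aestronglyMeasurable).mpr hDint
  have hemb : MeasurableEmbedding (reflHyp u c) := (reflHomeo (c := c) hu).measurableEmbedding
  have hDσeq : ∫ x, D (reflHyp u c x) = ∫ x, D x := hmp.integral_comp hemb D
  have hpos : 0 ≤ᵐ[volume] fun x => D x + D (reflHyp u c x) := by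
    filter_upwards [hbd] with x hx
    rcases lt_or_gt_of_ne hx with hlt | hgt
    · have h := pair_le hu f g hlt
      simp only [hDdef, hFdef, Pi.zero_apply]
      linarith
    · have hσlt : ⟪reflHyp u c x, u⟫ < c := by rw [inner_reflHyp hu]; linarith
      have h := pair_le hu f g hσlt
      rw [hinv x] at h
      simp only [hDdef, hFdef, Pi.zero_apply]
      linarith
  have h2D : 0 ≤ ∫ x, (D x + D (reflHyp u c x)) := integral_nonneg_of_ae hpos
  rw [integral_add hDint hDσint, hDσeq] at h2D
  have hD0 : 0 ≤ ∫ x, D x := by linarith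
  have hmain : ∫ x, f x * g x ≤ ∫ x, F x := by
    have h := hD0
    simp only [hDdef] at h
    rw [integral_sub hFint hGint] at h
    linarith
  calc ∫ x in Ω, v x * w x = ∫ x, f x * g x := by
        rw [hGa, integral_indicator hmeasΩ]
    _ ≤ ∫ x, F x := hmain
    _ = ∫ x in Ω, F x := by rw [integral_congr_ae hFeq, integral_indicator hmeasΩ]
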